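/- Fix i ∈ {1, 2, 3}, m ∈ 𝒳_i and λ ∈ ℝ, and define the multiplication–differentiation operator (ℋ_i u)(t, x) = −∂ₜu(t, x) + (−b_i(x) + λ m(t, x)) u(t, x) on 𝒳_i, with the same domain as 𝓛_i. Then the set of real parts of the spectrum of ℋ_i equals the closed interval [min_{x∈D̄_i} ĥ(x), max_{x∈D̄_i} ĥ(x)], where ĥ(x) = −b_i(x) + λ m̂(x). -/

import Mathlib

open MeasureTheory Set Filter Topology

noncomputable section

namespace NW

/-- Points of `ℝ^N`. -/
abbrev V (N : ℕ) := EuclideanSpace ℝ (Fin N)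

/-- Hypothesis (K) on the kernel: continuous, compactly supported, positive at the
origin, symmetric, with total integral one. -/
structure KernelHyp {N : ℕ} (κ : V N → ℝ) : Prop where
  cont : Continuous κ
  compSupp : HasCompactSupport κ
  pos0 : 0 < κ 0
  symm : ∀ z, κ (-z) = κ z
  int1 : (∫ z, κ z) = 1

/-- Standing assumptions on the spatial domain `D` (a smooth bounded domain). -/
def DomainHyp {N : ℕ} (D : Set (V N)) : Prop :=
  IsOpen D ∧ D.Nonempty ∧ IsConnected D ∧ Bornology.IsBounded D

variable {N : ℕ}

/-- Membership in the time-periodic space `𝒳` of continuous functions, `T`-periodic in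
time and periodic in space with periods from `shifts` (elements of `C(ℝ × D̄)` are
represented by their continuous extensions). -/
def MemX (T : ℝ) (shifts : Set (V N)) (u : ℝ → V N → ℂ) : Prop :=
  Continuous (fun q : ℝ × V N => u q.1 q.2) ∧
  (∀ t x, u (t + T) x = u t x) ∧
  (∀ s ∈ shifts, ∀ t x, u t (x + s) = u t x)

/-- Membership of a real-valued weight function in `𝒳`. -/
def MemW (T : ℝ) (shifts : Set (V N)) (m : ℝ → V N → ℝ) : Prop :=
  Continuous (fun q : ℝ × V N => m q.1 q.2) ∧
  (∀ t x, m (t + T) x = m t x) ∧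
  (∀ s ∈ shifts, ∀ t x, m t (x + s) = m t x)

/-- The time derivative `∂ₜ u`. -/
def dtu (u : ℝ → V N → ℂ) (t : ℝ) (x : V N) : ℂ := deriv (fun s => u s x) t

/-- Membership in the domain of `𝓛 + λ m`: members of `𝒳` that are `C¹` in `t` with
`∂ₜ u ∈ 𝒳`. -/
def MemDom (T : ℝ) (shifts : Set (V N)) (u : ℝ → V N → ℂ) : Prop :=
  MemX T shifts u ∧ (∀ x, Differentiable ℝ (fun s => u s x)) ∧
  Continuous (fun q : ℝ × V N => dtu u q.1 q.2)

/-- The operator `(𝓛 + λ m) u`, where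
`(𝓛 u)(t,x) = -∂ₜu(t,x) + ∫_S κ(y - x) u(t,y) dy - b(x) u(t,x)`. -/
def Au (S : Set (V N)) (b κ : V N → ℝ) (lam : ℝ) (m : ℝ → V N → ℝ)
    (u : ℝ → V N → ℂ) (t : ℝ) (x : V N) : ℂ :=
  - dtu u t x + (∫ y in S, κ (y - x) • u t y) - (b x : ℂ) * u t x
    + (lam * m t x) • u t x

/-- Equality of representatives on the relevant spatial region `Ω`. -/
def EqOnD (Ω : Set (V N)) (u v : ℝ → V N → ℂ) : Prop := ∀ t : ℝ, ∀ x ∈ Ω, u t x = v t x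

/-- `μ` belongs to the resolvent set of `𝓛 + λ m` on `𝒳`: the operator
`𝓛 + λ m - μ`, from its domain to `𝒳`, is bijective. -/
def InResolvent (T : ℝ) (shifts : Set (V N)) (Ω S : Set (V N)) (b κ : V N → ℝ)
    (lam : ℝ) (m : ℝ → V N → ℝ) (μ : ℂ) : Prop :=
  (∀ f, MemX T shifts f →
    ∃ u, MemDom T shifts u ∧
      EqOnD Ω (fun t x => Au S b κ lam m u t x - μ * u t x) f) ∧
  (∀ u v, MemDom T shifts u → MemDom T shifts v →
    EqOnD Ω (fun t x => Au S b κ lam m u t x - μ * u t x)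
      (fun t x => Au S b κ lam m v t x - μ * v t x) →
    EqOnD Ω u v)

/-- The spectrum of `𝓛 + λ m` on `𝒳`. -/
def Spec (T : ℝ) (shifts : Set (V N)) (Ω S : Set (V N)) (b κ : V N → ℝ)
    (lam : ℝ) (m : ℝ → V N → ℝ) : Set ℂ :=
  {μ | ¬ InResolvent T shifts Ω S b κ lam m μ}

/-- The principal spectrum point `μⁿ(λ)` of `𝓛 + λ m`: the supremum of the real parts
of the spectrum. -/
def muN (T : ℝ) (shifts : Set (V N)) (Ω S : Set (V N)) (b κ : V N → ℝ)
    (lam : ℝ) (m : ℝ → V N → ℝ) : ℝ :=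
  sSup (Complex.re '' Spec T shifts Ω S b κ lam m)

/-- `μ` is a principal eigenvalue of `𝓛 + λ m`: the eigenvalue problem
`𝓛 u + λ m u = μ u` has a positive solution in `𝒳`. -/
def IsPrincipalEigenvalue (T : ℝ) (shifts : Set (V N)) (Ω S : Set (V N)) (b κ : V N → ℝ)
    (lam : ℝ) (m : ℝ → V N → ℝ) (μ : ℝ) : Prop :=
  ∃ u, MemDom T shifts u ∧ (∀ t : ℝ, ∀ x ∈ Ω, (u t x).im = 0 ∧ 0 < (u t x).re) ∧
    ∀ t : ℝ, ∀ x ∈ Ω, Au S b κ lam m u t x = (μ : ℂ) * u t x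

/-! ### Time-independent versions -/

/-- Membership in the space `X` of continuous (spatially periodic) functions. -/
def MemX0 (shifts : Set (V N)) (u : V N → ℂ) : Prop :=
  Continuous u ∧ (∀ s ∈ shifts, ∀ x, u (x + s) = u x)

/-- The time-independent operator `K u - b u + λ m u`. -/
def Au0 (S : Set (V N)) (b κ : V N → ℝ) (lam : ℝ) (m : V N → ℝ)
    (u : V N → ℂ) (x : V N) : ℂ :=
  (∫ y in S, κ (y - x) • u y) - (b x : ℂ) * u x + (lam * m x) • u x

/-- Equality of representatives on `Ω` (time-independent case). -/
def EqOnD0 (Ω : Set (V N)) (u v : V N → ℂ) : Prop := ∀ x ∈ Ω, u x = v x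

/-- `μ` belongs to the resolvent set of `K - b + λ m` on `X`. -/
def InResolvent0 (shifts : Set (V N)) (Ω S : Set (V N)) (b κ : V N → ℝ)
    (lam : ℝ) (m : V N → ℝ) (μ : ℂ) : Prop :=
  (∀ f, MemX0 shifts f →
    ∃ u, MemX0 shifts u ∧ EqOnD0 Ω (fun x => Au0 S b κ lam m u x - μ * u x) f) ∧
  (∀ u v, MemX0 shifts u → MemX0 shifts v →
    EqOnD0 Ω (fun x => Au0 S b κ lam m u x - μ * u x)
      (fun x => Au0 S b κ lam m v x - μ * v x) →
    EqOnD0 Ω u v)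

/-- The spectrum of `K - b + λ m` on `X`. -/
def Spec0 (shifts : Set (V N)) (Ω S : Set (V N)) (b κ : V N → ℝ)
    (lam : ℝ) (m : V N → ℝ) : Set ℂ :=
  {μ | ¬ InResolvent0 shifts Ω S b κ lam m μ}

/-- The principal spectrum point of the time-independent problem. -/
def muN0 (shifts : Set (V N)) (Ω S : Set (V N)) (b κ : V N → ℝ)
    (lam : ℝ) (m : V N → ℝ) : ℝ :=
  sSup (Complex.re '' Spec0 shifts Ω S b κ lam m)

/-! ### The evolution family Φ -/

/-- `U` is the solution of `∂ₜ u = K u - b u + a u` with initial value `u₀` at time `0`. -/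
def IsSol (shifts : Set (V N)) (Ω S : Set (V N)) (b κ : V N → ℝ)
    (a : ℝ → V N → ℝ) (u₀ : V N → ℂ) (U : ℝ → V N → ℂ) : Prop :=
  Continuous (fun q : ℝ × V N => U q.1 q.2) ∧
  (∀ s ∈ shifts, ∀ t x, U t (x + s) = U t x) ∧
  (∀ x ∈ Ω, U 0 x = u₀ x) ∧
  (∀ x, Differentiable ℝ (fun s => U s x)) ∧
  (∀ t : ℝ, ∀ x ∈ Ω,
    dtu U t x = (∫ y in S, κ (y - x) • U t y) - (b x : ℂ) * U t x + (a t x) • U t x)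

/-- The relation `w = Φ(T, 0; a) u₀` (as elements of `X`, i.e. on `Ω`). -/
def PhiT (T : ℝ) (shifts : Set (V N)) (Ω S : Set (V N)) (b κ : V N → ℝ)
    (a : ℝ → V N → ℝ) (u₀ w : V N → ℂ) : Prop :=
  ∃ U, IsSol shifts Ω S b κ a u₀ U ∧ ∀ x ∈ Ω, w x = U T x

/-- `μ` belongs to the resolvent set of the time-`T` solution operator `Φ(T, 0; a)`
on `X`. -/
def InResolventPhi (T : ℝ) (shifts : Set (V N)) (Ω S : Set (V N)) (b κ : V N → ℝ)
    (a : ℝ → V N → ℝ) (μ : ℂ) : Prop :=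
  ∀ f, MemX0 shifts f →
    (∃ u₀ w, MemX0 shifts u₀ ∧ PhiT T shifts Ω S b κ a u₀ w ∧
      EqOnD0 Ω (fun x => w x - μ * u₀ x) f) ∧
    (∀ u₀ u₀' w w', MemX0 shifts u₀ → MemX0 shifts u₀' →
      PhiT T shifts Ω S b κ a u₀ w → PhiT T shifts Ω S b κ a u₀' w' →
      EqOnD0 Ω (fun x => w x - μ * u₀ x) f → EqOnD0 Ω (fun x => w' x - μ * u₀' x) f →
      EqOnD0 Ω u₀ u₀')

/-- The spectrum of the time-`T` solution operator `Φ(T, 0; a)` on `X`. -/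
def SpecPhi (T : ℝ) (shifts : Set (V N)) (Ω S : Set (V N)) (b κ : V N → ℝ)
    (a : ℝ → V N → ℝ) : Set ℂ :=
  {μ | ¬ InResolventPhi T shifts Ω S b κ a μ}

/-- The spectral radius of `Φ(T, 0; a)`. -/
def specRadPhi (T : ℝ) (shifts : Set (V N)) (Ω S : Set (V N)) (b κ : V N → ℝ)
    (a : ℝ → V N → ℝ) : ℝ :=
  sSup ((fun μ : ℂ => ‖μ‖) '' SpecPhi T shifts Ω S b κ a)

/-! ### Auxiliary data -/

/-- The spatial periods `p₁ e₁, …, p_N e_N` for the periodic case. -/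
def pShifts (N : ℕ) (p : Fin N → ℝ) : Set (V N) :=
  Set.range (fun j : Fin N => p j • (EuclideanSpace.single j (1 : ℝ)))

/-- The periodicity cell `D₃ = [0, p₁] × ⋯ × [0, p_N]`. -/
def cell (N : ℕ) (p : Fin N → ℝ) : Set (V N) :=
  {x : V N | ∀ j : Fin N, x j ∈ Set.Icc 0 (p j)}

/-- The time average `m̂(x) = (1/T) ∫₀ᵀ m(t,x) dt` of the weight. -/
def mhat (T : ℝ) (m : ℝ → V N → ℝ) (x : V N) : ℝ := (1 / T) * ∫ t in (0:ℝ)..T, m t x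

/-- `𝒫(m) = ∫₀ᵀ max_{x ∈ Ω} m(t, x) dt`. -/
def Pm (T : ℝ) (Ω : Set (V N)) (m : ℝ → V N → ℝ) : ℝ :=
  ∫ t in (0:ℝ)..T, sSup ((m t) '' Ω)

end NW

namespace NW

variable {N : ℕ}

/-- The Neumann-type boundary term `b₂(x) = ∫_D κ(y - x) dy`. -/
def bNeu (D : Set (V N)) (κ : V N → ℝ) : V N → ℝ := fun x => ∫ y in D, κ (y - x)

/-- The principal spectrum point `μ₁ⁿ(λ)` of the Dirichlet-type problem `𝓛₁ + λ m`
on `𝒳₁` (shifts `∅`, `Ω = closure D`, `S = D`, `b = 1`). -/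
def muN1 (D : Set (V N)) (T : ℝ) (κ : V N → ℝ) (lam : ℝ) (m : ℝ → V N → ℝ) : ℝ :=
  muN T ∅ (closure D) D (fun _ => 1) κ lam m

/-- The principal spectrum point `μ₂ⁿ(λ)` of the Neumann-type problem `𝓛₂ + λ m`
on `𝒳₂`. -/
def muN2 (D : Set (V N)) (T : ℝ) (κ : V N → ℝ) (lam : ℝ) (m : ℝ → V N → ℝ) : ℝ :=
  muN T ∅ (closure D) D (bNeu D κ) κ lam m

/-- The principal spectrum point `μ₃ⁿ(λ)` of the spatially periodic problem `𝓛₃ + λ m`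
on `𝒳₃`. -/
def muN3 (p : Fin N → ℝ) (T : ℝ) (κ : V N → ℝ) (lam : ℝ) (m : ℝ → V N → ℝ) : ℝ :=
  muN T (pShifts N p) Set.univ Set.univ (fun _ => 1) κ lam m

/-- The principal spectrum point of the time-independent Dirichlet-type problem on `X₁`. -/
def muN01 (D : Set (V N)) (κ : V N → ℝ) (lam : ℝ) (m : V N → ℝ) : ℝ :=
  muN0 ∅ (closure D) D (fun _ => 1) κ lam m

/-- The principal spectrum point of the time-independent Neumann-type problem on `X₂`. -/
def muN02 (D : Set (V N)) (κ : V N → ℝ) (lam : ℝ) (m : V N → ℝ) : ℝ :=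
  muN0 ∅ (closure D) D (bNeu D κ) κ lam m

/-- The principal spectrum point of the time-independent spatially periodic problem
on `X₃`. -/
def muN03 (p : Fin N → ℝ) (κ : V N → ℝ) (lam : ℝ) (m : V N → ℝ) : ℝ :=
  muN0 (pShifts N p) Set.univ Set.univ (fun _ => 1) κ lam m

/-- `μ` is a principal eigenvalue of the Dirichlet-type problem `𝓛₁ + λ m`. -/
def IsPE1 (D : Set (V N)) (T : ℝ) (κ : V N → ℝ) (lam : ℝ) (m : ℝ → V N → ℝ) (μ : ℝ) : Prop :=
  IsPrincipalEigenvalue T ∅ (closure D) D (fun _ => 1) κ lam m μ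

/-- `μ` is a principal eigenvalue of the Neumann-type problem `𝓛₂ + λ m`. -/
def IsPE2 (D : Set (V N)) (T : ℝ) (κ : V N → ℝ) (lam : ℝ) (m : ℝ → V N → ℝ) (μ : ℝ) : Prop :=
  IsPrincipalEigenvalue T ∅ (closure D) D (bNeu D κ) κ lam m μ

/-- `μ` is a principal eigenvalue of the spatially periodic problem `𝓛₃ + λ m`. -/
def IsPE3 (p : Fin N → ℝ) (T : ℝ) (κ : V N → ℝ) (lam : ℝ) (m : ℝ → V N → ℝ) (μ : ℝ) : Prop :=
  IsPrincipalEigenvalue T (pShifts N p) Set.univ Set.univ (fun _ => 1) κ lam m μ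

end NW

namespace NWProof
open NW

lemma exp_ne_one_of_re_ne_zero {z : ℂ} (hz : z.re ≠ 0) : Complex.exp z ≠ 1 := by
  intro h1
  have := congrArg norm h1
  rw [Complex.norm_exp, norm_one, Real.exp_eq_one_iff] at this
  exact hz this

lemma primitive_shift {E : Type*} [NormedAddCommGroup E] [NormedSpace ℝ E]
    {g : ℝ → E} (hg : Continuous g) (T t : ℝ) :
    ∫ s in (0:ℝ)..(t + T), g s = (∫ s in (0:ℝ)..T, g s) + ∫ s in (0:ℝ)..t, g (s + T) := by
  have h1 : ∫ s in (0:ℝ)..t, g (s + T) = ∫ s in (0+T:ℝ)..(t+T), g s :=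
    intervalIntegral.integral_comp_add_right g T
  rw [h1, zero_add,
    intervalIntegral.integral_add_adjacent_intervals (hg.intervalIntegrable 0 T)
      (hg.intervalIntegrable T (t + T))]

lemma hasDerivAt_primitive {E : Type*} [NormedAddCommGroup E] [NormedSpace ℝ E]
    [CompleteSpace E] {g : ℝ → E} (hg : Continuous g) (t : ℝ) :
    HasDerivAt (fun τ => ∫ s in (0:ℝ)..τ, g s) (g t) t :=
  intervalIntegral.integral_hasDerivAt_right (hg.intervalIntegrable 0 t)
    hg.stronglyMeasurable.stronglyMeasurableAtFilter hg.continuousAt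

lemma eq_of_hasDerivAt_zero {f : ℝ → ℂ} (hf : ∀ t, HasDerivAt f 0 t) (s t : ℝ) :
    f s = f t :=
  is_const_of_deriv_eq_zero (fun u => (hf u).differentiableAt)
    (fun u => (hf u).deriv) s t

lemma hasDerivAt_B {β : ℝ → ℝ} (hβ : Continuous β) (μ : ℂ) (t : ℝ) :
    HasDerivAt (fun τ => ((∫ s in (0:ℝ)..τ, β s : ℝ) : ℂ) - τ * μ) ((β t : ℂ) - μ) t := by
  have h1 : HasDerivAt (fun τ => ((∫ s in (0:ℝ)..τ, β s : ℝ) : ℂ)) ((β t : ℂ)) t :=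
    (hasDerivAt_primitive hβ t).ofReal_comp
  have h2 : HasDerivAt (fun τ : ℝ => (τ : ℂ) * μ) μ t := by
    simpa using ((hasDerivAt_id t).ofReal_comp).mul_const μ
  simpa using h1.fun_sub h2

variable {N : ℕ}

set_option maxHeartbeats 1000000 in
/-- Construction of the periodic solution of `u' = (α - μ) u - f`. -/
lemma ode_periodic_solve (T : ℝ) (shifts : Set (V N))
    (α : ℝ → V N → ℝ) (hαc : Continuous (fun q : ℝ × V N => α q.1 q.2))
    (hαT : ∀ t x, α (t + T) x = α t x)
    (hαs : ∀ s ∈ shifts, ∀ t x, α t (x + s) = α t x)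
    (μ : ℂ)
    (hμ : ∀ x : V N, Complex.exp (((∫ s in (0:ℝ)..T, α s x : ℝ) : ℂ) - T * μ) ≠ 1)
    (f : ℝ → V N → ℂ) (hf : MemX T shifts f) :
    ∃ u, MemDom T shifts u ∧
      ∀ t x, dtu u t x = ((α t x : ℂ) - μ) * u t x - f t x := by
  have hαx : ∀ x, Continuous (fun s => α s x) :=
    fun x => hαc.comp₂ continuous_id continuous_const
  set P : ℝ → V N → ℝ := fun t x => ∫ s in (0:ℝ)..t, α s x with hP
  set A : ℝ → V N → ℂ := fun t x => ((P t x : ℝ) : ℂ) - t * μ with hA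
  have hPc : Continuous (fun q : ℝ × V N => P q.1 q.2) := by
    have h0 : Continuous (Function.uncurry fun (x : V N) (s : ℝ) => α s x) :=
      hαc.comp₂ continuous_snd continuous_fst
    have h := intervalIntegral.continuous_parametric_primitive_of_continuous
      (μ := volume) (f := fun (x : V N) (s : ℝ) => α s x) (a₀ := 0) h0
    exact h.comp₂ continuous_snd continuous_fst
  have hAc : Continuous (fun q : ℝ × V N => A q.1 q.2) :=
    (Complex.continuous_ofReal.comp hPc).sub
      ((Complex.continuous_ofReal.comp continuous_fst).mul continuous_const)
  have hgc : Continuous (fun q : ℝ × V N => Complex.exp (-(A q.1 q.2)) * f q.1 q.2) :=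
    (hAc.neg.cexp).mul hf.1
  set G : ℝ → V N → ℂ := fun t x => ∫ s in (0:ℝ)..t, Complex.exp (-(A s x)) * f s x with hG
  have hGc : Continuous (fun q : ℝ × V N => G q.1 q.2) := by
    have h0 : Continuous (Function.uncurry
        fun (x : V N) (s : ℝ) => Complex.exp (-(A s x)) * f s x) :=
      hgc.comp₂ continuous_snd continuous_fst
    have h := intervalIntegral.continuous_parametric_primitive_of_continuous
      (μ := volume) (f := fun (x : V N) (s : ℝ) => Complex.exp (-(A s x)) * f s x)
      (a₀ := 0) h0
    exact h.comp₂ continuous_snd continuous_fst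
  have hgx : ∀ x, Continuous (fun s => Complex.exp (-(A s x)) * f s x) :=
    fun x => hgc.comp₂ continuous_id continuous_const
  have hden : ∀ x, Complex.exp (A T x) - 1 ≠ 0 := fun x => sub_ne_zero.2 (hμ x)
  set c : V N → ℂ := fun x => Complex.exp (A T x) * G T x / (Complex.exp (A T x) - 1) with hc
  have hATc : Continuous (fun x => Complex.exp (A T x)) :=
    (hAc.comp₂ continuous_const continuous_id).cexp
  have hGTc : Continuous (fun x => G T x) := hGc.comp₂ continuous_const continuous_id
  have hcc : Continuous c := (hATc.mul hGTc).div (hATc.sub continuous_const) hden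
  set u : ℝ → V N → ℂ := fun t x => Complex.exp (A t x) * (c x - G t x) with hu
  have huc : Continuous (fun q : ℝ × V N => u q.1 q.2) :=
    (hAc.cexp).mul ((hcc.comp continuous_snd).sub hGc)
  -- derivative
  have hu' : ∀ t x, HasDerivAt (fun τ => u τ x) (((α t x : ℂ) - μ) * u t x - f t x) t := by
    intro t x
    have hA' : HasDerivAt (fun τ => A τ x) ((α t x : ℂ) - μ) t := hasDerivAt_B (hαx x) μ t
    have hexp : HasDerivAt (fun τ => Complex.exp (A τ x))
        (Complex.exp (A t x) * ((α t x : ℂ) - μ)) t := hA'.cexp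
    have hG' : HasDerivAt (fun τ => G τ x) (Complex.exp (-(A t x)) * f t x) t :=
      hasDerivAt_primitive (hgx x) t
    have hfull := hexp.fun_mul ((hasDerivAt_const t (c x)).fun_sub hG')
    convert hfull using 1
    · rfl
    have hee : Complex.exp (A t x) * Complex.exp (-(A t x)) = 1 := by
      rw [← Complex.exp_add]; simp
    show ((α t x : ℂ) - μ) * (Complex.exp (A t x) * (c x - G t x)) - f t x
      = Complex.exp (A t x) * ((α t x : ℂ) - μ) * (c x - G t x)
        + Complex.exp (A t x) * (0 - Complex.exp (-(A t x)) * f t x)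
    linear_combination (f t x) * hee
  -- time periodicity
  have hPper : ∀ t x, P (t + T) x = P T x + P t x := by
    intro t x
    have := primitive_shift (hαx x) T t
    simpa [hαT] using this
  have hAper : ∀ t x, A (t + T) x = A T x + A t x := by
    intro t x
    simp only [hA, hPper]
    push_cast
    ring
  have hGper : ∀ t x, G (t + T) x = G T x + Complex.exp (-(A T x)) * G t x := by
    intro t x
    have h0 := primitive_shift (hgx x) T t
    have h1 : ∀ s : ℝ, Complex.exp (-(A (s + T) x)) * f (s + T) x
        = Complex.exp (-(A T x)) * (Complex.exp (-(A s x)) * f s x) := by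
      intro s
      rw [hAper s x, hf.2.1 s x, neg_add, Complex.exp_add]
      ring
    simp only [hG]
    rw [h0]
    congr 1
    calc ∫ s in (0:ℝ)..t, Complex.exp (-(A (s + T) x)) * f (s + T) x
        = ∫ s in (0:ℝ)..t, Complex.exp (-(A T x)) * (Complex.exp (-(A s x)) * f s x) := by
          simp only [h1]
      _ = Complex.exp (-(A T x)) * G t x := by
          rw [intervalIntegral.integral_const_mul]
  have hkey0 : ∀ x, c x * (Complex.exp (A T x) - 1) = Complex.exp (A T x) * G T x := by
    intro x
    simp only [hc]
    exact div_mul_cancel₀ _ (hden x)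
  have hkey : ∀ x, Complex.exp (A T x) * (c x - G T x) = c x := fun x => by
    linear_combination hkey0 x
  have huT : ∀ t x, u (t + T) x = u t x := by
    intro t x
    show Complex.exp (A (t + T) x) * (c x - G (t + T) x) = Complex.exp (A t x) * (c x - G t x)
    rw [hAper, hGper, Complex.exp_add]
    have hee : Complex.exp (A T x) * Complex.exp (-(A T x)) = 1 := by
      rw [← Complex.exp_add]; simp
    linear_combination Complex.exp (A t x) * (hkey x)
      - Complex.exp (A t x) * G t x * hee
  -- shift invariance
  have hPs : ∀ s ∈ shifts, ∀ t x, P t (x + s) = P t x := by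
    intro s hs t x
    exact intervalIntegral.integral_congr (fun τ _ => hαs s hs τ x)
  have hAs : ∀ s ∈ shifts, ∀ t x, A t (x + s) = A t x := by
    intro s hs t x; simp only [hA, hPs s hs]
  have hGs : ∀ s ∈ shifts, ∀ t x, G t (x + s) = G t x := by
    intro s hs t x
    exact intervalIntegral.integral_congr (fun τ _ => by rw [hAs s hs, hf.2.2 s hs])
  have hcs : ∀ s ∈ shifts, ∀ x, c (x + s) = c x := by
    intro s hs x; simp only [hc, hAs s hs, hGs s hs]
  have hus : ∀ s ∈ shifts, ∀ t x, u t (x + s) = u t x := by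
    intro s hs t x
    show Complex.exp (A t (x+s)) * (c (x+s) - G t (x+s)) = _
    rw [hAs s hs, hcs s hs, hGs s hs]
  have hdtu : (fun q : ℝ × V N => dtu u q.1 q.2)
      = fun q : ℝ × V N => ((α q.1 q.2 : ℂ) - μ) * u q.1 q.2 - f q.1 q.2 :=
    funext fun q => (hu' q.1 q.2).deriv
  refine ⟨u, ⟨⟨huc, huT, hus⟩, fun x t => (hu' t x).differentiableAt, ?_⟩,
    fun t x => (hu' t x).deriv⟩
  rw [hdtu]
  exact (((Complex.continuous_ofReal.comp hαc).sub continuous_const).mul huc).sub hf.1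

/-- Uniqueness for the scalar periodic ODE `w' = (β - μ) w`. -/
lemma ode_unique {β : ℝ → ℝ} (hβ : Continuous β) {μ : ℂ} {T : ℝ}
    (hE : Complex.exp (((∫ s in (0:ℝ)..T, β s : ℝ) : ℂ) - T * μ) ≠ 1)
    {w : ℝ → ℂ} (hw : ∀ t, HasDerivAt w (((β t : ℂ) - μ) * w t) t)
    (hper : w T = w 0) : ∀ t, w t = 0 := by
  set B : ℝ → ℂ := fun τ => ((∫ s in (0:ℝ)..τ, β s : ℝ) : ℂ) - τ * μ with hB
  have hB0 : B 0 = 0 := by simp [hB]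
  set φ : ℝ → ℂ := fun t => Complex.exp (-(B t)) * w t with hφ
  have hφ' : ∀ t, HasDerivAt φ 0 t := by
    intro t
    have h1 : HasDerivAt (fun τ => Complex.exp (-(B τ)))
        (Complex.exp (-(B t)) * -((β t : ℂ) - μ)) t :=
      ((hasDerivAt_B hβ μ t).neg).cexp
    have := h1.fun_mul (hw t)
    convert this using 1
    · rfl
    ring
  have hconst : ∀ t, φ t = φ 0 := fun t => eq_of_hasDerivAt_zero hφ' t 0
  have hw0 : w 0 = 0 := by
    have h1 : φ T = φ 0 := hconst T
    have h2 : Complex.exp (-(B T)) * w 0 = w 0 := by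
      simpa [hφ, hB0, hper] using h1
    by_contra hne
    have h3 : Complex.exp (-(B T)) = 1 := by
      nth_rewrite 2 [← one_mul (w 0)] at h2
      exact mul_right_cancel₀ hne h2
    have : Complex.exp (B T) = 1 := by
      have := congrArg (· * Complex.exp (B T)) h3
      simpa [← Complex.exp_add] using this.symm
    exact hE this
  intro t
  have h1 : φ t = 0 := by rw [hconst t]; simp [hφ, hB0, hw0]
  have h2 := Complex.exp_ne_zero (-(B t))
  simpa [hφ, mul_eq_zero, h2] using h1

/-- Nonexistence of a periodic solution to `w' = β w - e^{∫β}` when `∫₀ᵀ β = 0`. -/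
lemma ode_no_solution {β : ℝ → ℝ} (hβ : Continuous β) {T : ℝ} (hT : T ≠ 0)
    (hint : (∫ s in (0:ℝ)..T, β s) = 0)
    {w : ℝ → ℂ} (hw : ∀ t, HasDerivAt w ((β t : ℂ) * w t
      - Complex.exp ((∫ s in (0:ℝ)..t, β s : ℝ) : ℂ)) t)
    (hper : w T = w 0) : False := by
  set B : ℝ → ℂ := fun τ => ((∫ s in (0:ℝ)..τ, β s : ℝ) : ℂ) with hBdef
  have hB' : ∀ t, HasDerivAt B (β t : ℂ) t := fun t =>
    (hasDerivAt_primitive hβ t).ofReal_comp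
  set φ : ℝ → ℂ := fun t => Complex.exp (-(B t)) * w t + t with hφ
  have hφ' : ∀ t, HasDerivAt φ 0 t := by
    intro t
    have h1 : HasDerivAt (fun τ => Complex.exp (-(B τ)))
        (Complex.exp (-(B t)) * -(β t : ℂ)) t :=
      ((hB' t).neg).cexp
    have h2 : HasDerivAt (fun τ : ℝ => (τ : ℂ)) 1 t := (hasDerivAt_id t).ofReal_comp
    have := (h1.fun_mul (hw t)).fun_add h2
    convert this using 1
    · rfl
    have hee : Complex.exp (-(B t)) * Complex.exp (B t) = 1 := by
      rw [← Complex.exp_add]; simp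
    calc (0:ℂ) = Complex.exp (-(B t)) * ((β t : ℂ) * w t) - Complex.exp (-(B t)) * (β t : ℂ) * w t
        - (Complex.exp (-(B t)) * Complex.exp (B t)) + 1 := by rw [hee]; ring
      _ = Complex.exp (-(B t)) * -(β t : ℂ) * w t
          + Complex.exp (-(B t)) * ((β t : ℂ) * w t - Complex.exp (B t)) + 1 := by ring
  have hconst : φ T = φ 0 := eq_of_hasDerivAt_zero hφ' T 0
  have hBT : B T = 0 := by simp [hBdef, hint]
  have hB0 : B 0 = 0 := by simp [hBdef]
  have : (T : ℂ) = 0 := by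
    have := hconst
    simp [hφ, hBT, hB0, hper] at this
    exact_mod_cast this
  exact hT (by exact_mod_cast this)


end NWProof

namespace NWProof
open NW

variable {N : ℕ}

lemma Au_sub_eq (S : Set (V N)) (b : V N → ℝ) (lam : ℝ) (m : ℝ → V N → ℝ)
    (u : ℝ → V N → ℂ) (μ : ℂ) (t : ℝ) (x : V N) :
    Au S b (fun _ => 0) lam m u t x - μ * u t x
      = -dtu u t x + (((-b x + lam * m t x : ℝ) : ℂ) - μ) * u t x := by
  unfold Au
  rw [show (∫ y in S, (fun _ : V N => (0:ℝ)) (y - x) • u t y) = 0 by simp]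
  rw [Complex.real_smul]
  push_cast
  ring

lemma mhat_continuous (T : ℝ) (m : ℝ → V N → ℝ)
    (hmc : Continuous (fun q : ℝ × V N => m q.1 q.2)) :
    Continuous (mhat T m) := by
  apply continuous_const.mul
  exact intervalIntegral.continuous_parametric_intervalIntegral_of_continuous'
    (μ := volume) (f := fun (x : V N) (t : ℝ) => m t x)
    (hmc.comp₂ continuous_snd continuous_fst) 0 T

lemma integral_afun (T : ℝ) (hT : T ≠ 0) (b : V N → ℝ) (lam : ℝ)
    (m : ℝ → V N → ℝ) (hmc : Continuous (fun q : ℝ × V N => m q.1 q.2)) (x : V N) :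
    (∫ s in (0:ℝ)..T, (-b x + lam * m s x)) = T * (-b x + lam * mhat T m x) := by
  have hmx : Continuous (fun s => m s x) := hmc.comp₂ continuous_id continuous_const
  rw [intervalIntegral.integral_add (intervalIntegrable_const)
    ((continuous_const.fun_mul hmx).intervalIntegrable 0 T),
    intervalIntegral.integral_const, intervalIntegral.integral_const_mul]
  unfold mhat
  field_simp
  ring

set_option maxHeartbeats 1000000 in
/-- The general form of the multiplication-operator spectrum statement. -/
lemma spec_re_eq (T : ℝ) (hT : 0 < T) (shifts : Set (V N)) (Ω C S : Set (V N))
    (b : V N → ℝ) (hbc : Continuous b) (hbs : ∀ s ∈ shifts, ∀ x, b (x + s) = b x)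
    (m : ℝ → V N → ℝ) (hm : MemW T shifts m) (lam : ℝ)
    (hC : IsCompact C) (hCpc : IsPreconnected C) (hCne : C.Nonempty) (hCΩ : C ⊆ Ω)
    (hred : ∀ x ∈ Ω, ∃ x' ∈ C,
      (-b x' + lam * mhat T m x') = -b x + lam * mhat T m x) :
    Complex.re '' Spec T shifts Ω S b (fun _ => 0) lam m
      = Icc (sInf ((fun x => -b x + lam * mhat T m x) '' C))
            (sSup ((fun x => -b x + lam * mhat T m x) '' C)) := by
  have hmc := hm.1
  set h : V N → ℝ := fun x => -b x + lam * mhat T m x with hh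
  have hhc : Continuous h := (hbc.neg).add
    (continuous_const.mul (mhat_continuous T m hmc))
  set m₁ := sInf (h '' C) with hm₁
  set m₂ := sSup (h '' C) with hm₂
  have himg : IsCompact (h '' C) := hC.image hhc
  have hne : (h '' C).Nonempty := hCne.image h
  have hm₁mem : m₁ ∈ h '' C := himg.sInf_mem hne
  have hm₂mem : m₂ ∈ h '' C := himg.sSup_mem hne
  have hm₁₂ : m₁ ≤ m₂ := le_csSup himg.bddAbove hm₁mem
  have hhx : ∀ x ∈ Ω, h x ∈ Icc m₁ m₂ := by
    intro x hx
    obtain ⟨x', hx', hx'e⟩ := hred x hx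
    have hmem : h x ∈ h '' C := ⟨x', hx', hx'e⟩
    exact ⟨csInf_le himg.bddBelow hmem, le_csSup himg.bddAbove hmem⟩
  have hac : Continuous (fun q : ℝ × V N => -b q.2 + lam * m q.1 q.2) :=
    ((hbc.comp continuous_snd).neg).add (continuous_const.mul hmc)
  have haint : ∀ x : V N, (∫ s in (0:ℝ)..T, (-b x + lam * m s x)) = T * h x :=
    fun x => integral_afun T hT.ne' b lam m hmc x
  have hmhs : ∀ s ∈ shifts, ∀ x, mhat T m (x + s) = mhat T m x := by
    intro s hs x
    unfold mhat
    congr 1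
    exact intervalIntegral.integral_congr (fun τ _ => hm.2.2 s hs τ x)
  have hhs : ∀ s ∈ shifts, ∀ x, h (x + s) = h x := by
    intro s hs x
    simp only [hh, hbs s hs, hmhs s hs]
  apply Subset.antisymm
  · -- spectrum has real parts in the interval
    rintro r ⟨μ, hμspec, rfl⟩
    by_contra hout
    apply hμspec
    constructor
    · -- surjectivity
      intro f hf
      set cl : V N → ℝ := fun x => min (max (h x) m₁) m₂ with hcl
      have hclc : Continuous cl := (hhc.max continuous_const).min continuous_const
      have hclIcc : ∀ x, cl x ∈ Icc m₁ m₂ := fun x =>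
        ⟨le_min (le_max_right _ _) hm₁₂, min_le_right _ _⟩
      have hclΩ : ∀ x ∈ Ω, cl x = h x := by
        intro x hx
        have hx2 := hhx x hx
        simp only [hcl, max_eq_left hx2.1, min_eq_left hx2.2]
      set α : ℝ → V N → ℝ := fun t x => (-b x + lam * m t x) + (cl x - h x) with hα
      have hαc : Continuous (fun q : ℝ × V N => α q.1 q.2) :=
        hac.add ((hclc.sub hhc).comp continuous_snd)
      have hαT : ∀ t x, α (t + T) x = α t x := by
        intro t x; simp only [hα, hm.2.1]
      have hαs : ∀ s ∈ shifts, ∀ t x, α t (x + s) = α t x := by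
        intro s hs t x
        simp only [hα, hcl, hbs s hs, hm.2.2 s hs, hhs s hs]
      have hαint : ∀ x, (∫ s in (0:ℝ)..T, α s x) = T * cl x := by
        intro x
        have hax : Continuous (fun s => -b x + lam * m s x) :=
          hac.comp₂ continuous_id continuous_const
        simp only [hα]
        rw [intervalIntegral.integral_add (hax.intervalIntegrable 0 T)
          intervalIntegrable_const, haint x, intervalIntegral.integral_const]
        simp only [smul_eq_mul, sub_zero]
        ring
      have hαexp : ∀ x : V N,
          Complex.exp (((∫ s in (0:ℝ)..T, α s x : ℝ) : ℂ) - T * μ) ≠ 1 := by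
        intro x
        apply exp_ne_one_of_re_ne_zero
        rw [hαint x]
        simp only [Complex.sub_re, Complex.ofReal_re, Complex.mul_re,
          Complex.ofReal_im]
        intro h0
        apply hout
        have hcx : cl x = μ.re := by nlinarith
        exact hcx ▸ hclIcc x
      obtain ⟨u, hu, hueq⟩ := ode_periodic_solve T shifts α hαc hαT hαs μ hαexp f hf
      refine ⟨u, hu, ?_⟩
      intro t x hx
      show Au S b (fun _ => (0:ℝ)) lam m u t x - μ * u t x = f t x
      rw [Au_sub_eq]
      have hd := hueq t x
      have hαa : α t x = -b x + lam * m t x := by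
        simp only [hα, hclΩ x hx]; ring
      rw [hd, hαa]
      ring
    · -- uniqueness
      intro u v hu hv heq t x hx
      have hax : Continuous (fun s => -b x + lam * m s x) :=
        hac.comp₂ continuous_id continuous_const
      have hEne : Complex.exp
          (((∫ s in (0:ℝ)..T, (-b x + lam * m s x) : ℝ) : ℂ) - T * μ) ≠ 1 := by
        apply exp_ne_one_of_re_ne_zero
        rw [haint x]
        simp only [Complex.sub_re, Complex.ofReal_re, Complex.mul_re,
          Complex.ofReal_im]
        intro h0
        apply hout
        have hhxe : h x = μ.re := by nlinarith
        exact hhxe ▸ hhx x hx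
      have hw : ∀ τ, HasDerivAt (fun σ => u σ x - v σ x)
          ((((-b x + lam * m τ x : ℝ) : ℂ) - μ) * (u τ x - v τ x)) τ := by
        intro τ
        have hdu : HasDerivAt (fun σ => u σ x) (dtu u τ x) τ := (hu.2.1 x τ).hasDerivAt
        have hdv : HasDerivAt (fun σ => v σ x) (dtu v τ x) τ := (hv.2.1 x τ).hasDerivAt
        have he := heq τ x hx
        simp only at he
        rw [Au_sub_eq, Au_sub_eq] at he
        have h2 : dtu u τ x - dtu v τ x
            = (((-b x + lam * m τ x : ℝ) : ℂ) - μ) * (u τ x - v τ x) := by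
          linear_combination -he
        have := hdu.sub hdv
        rw [h2] at this
        exact this
      have hper : u T x - v T x = u 0 x - v 0 x := by
        have h1 : u (0 + T) x = u 0 x := hu.1.2.1 0 x
        have h2 : v (0 + T) x = v 0 x := hv.1.2.1 0 x
        rw [zero_add] at h1 h2
        rw [h1, h2]
      exact sub_eq_zero.mp (ode_unique hax hEne hw hper t)
  · -- interval contained in real parts of spectrum
    intro r hr
    have hrmem : r ∈ h '' C :=
      ((hCpc.image h hhc.continuousOn).ordConnected).out hm₁mem hm₂mem hr
    obtain ⟨x₀, hx₀C, hx₀⟩ := hrmem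
    refine ⟨(r : ℂ), ?_, Complex.ofReal_re r⟩
    intro hres
    obtain ⟨hsurj, -⟩ := hres
    have hax₀ : Continuous (fun s : ℝ => -b x₀ + lam * m s x₀) :=
      hac.comp₂ continuous_id continuous_const
    have hβc : Continuous (fun s : ℝ => -b x₀ + lam * m s x₀ - r) :=
      hax₀.sub continuous_const
    have hβint : (∫ s in (0:ℝ)..T, (-b x₀ + lam * m s x₀ - r)) = 0 := by
      rw [intervalIntegral.integral_sub (hax₀.intervalIntegrable 0 T)
        intervalIntegrable_const, haint x₀, intervalIntegral.integral_const]
      simp only [smul_eq_mul, sub_zero, hx₀]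
      ring
    set f : ℝ → V N → ℂ := fun t _ =>
      Complex.exp (((∫ s in (0:ℝ)..t, (-b x₀ + lam * m s x₀ - r) : ℝ)) : ℂ) with hfdef
    have hfX : MemX T shifts f := by
      refine ⟨?_, ?_, fun s hs t x => rfl⟩
      · exact (Complex.continuous_ofReal.comp
          ((intervalIntegral.continuous_primitive
            (fun a b => hβc.intervalIntegrable a b) 0).comp continuous_fst)).cexp
      · intro t x
        simp only [hfdef]
        congr 2
        rw [primitive_shift hβc T t, hβint]
        simp [hm.2.1]
    obtain ⟨u, hu, hueq⟩ := hsurj f hfX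
    have hx₀Ω := hCΩ hx₀C
    refine ode_no_solution hβc hT.ne' hβint (w := fun t => u t x₀) ?_ ?_
    · intro t
      have hdu : HasDerivAt (fun σ => u σ x₀) (dtu u t x₀) t := (hu.2.1 x₀ t).hasDerivAt
      have he := hueq t x₀ hx₀Ω
      simp only at he
      rw [Au_sub_eq] at he
      have h2 : dtu u t x₀
          = ((-b x₀ + lam * m t x₀ - r : ℝ) : ℂ) * u t x₀
            - Complex.exp (((∫ s in (0:ℝ)..t, (-b x₀ + lam * m s x₀ - r) : ℝ)) : ℂ) := by
        have hfv : f t x₀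
            = Complex.exp (((∫ s in (0:ℝ)..t, (-b x₀ + lam * m s x₀ - r) : ℝ)) : ℂ) := rfl
        rw [hfv] at he
        push_cast at he ⊢
        linear_combination -he
      rw [h2] at hdu
      exact hdu
    · have h1 : u (0 + T) x₀ = u 0 x₀ := hu.1.2.1 0 x₀
      rwa [zero_add] at h1

end NWProof

namespace NWProof
open NW
open scoped Convolution

variable {N : ℕ}

lemma bNeu_continuous (D : Set (V N)) (hDo : IsOpen D)
    (hDb : Bornology.IsBounded D) {κ : V N → ℝ} (hκ : KernelHyp κ) :
    Continuous (bNeu D κ) := by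
  have hmeas : MeasurableSet D := hDo.measurableSet
  have hfin : volume D < ⊤ := hDb.measure_lt_top
  have hint : Integrable (D.indicator (fun _ => (1:ℝ))) volume := by
    rw [integrable_indicator_iff hmeas]
    exact integrableOn_const hfin.ne
  have hconv : Continuous
      ((D.indicator (fun _ => (1:ℝ))) ⋆[ContinuousLinearMap.lsmul ℝ ℝ] κ) :=
    hκ.compSupp.continuous_convolution_right (ContinuousLinearMap.lsmul ℝ ℝ)
      hint.locallyIntegrable hκ.cont
  have heq : bNeu D κ
      = (D.indicator (fun _ => (1:ℝ))) ⋆[ContinuousLinearMap.lsmul ℝ ℝ] κ := by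
    funext x
    rw [convolution_def]
    have h1 : ∀ t : V N, (ContinuousLinearMap.lsmul ℝ ℝ)
        (D.indicator (fun _ => (1:ℝ)) t) (κ (x - t))
        = D.indicator (fun t => κ (x - t)) t := by
      intro t
      by_cases ht : t ∈ D <;>
        simp [Set.indicator_of_mem, Set.indicator_of_notMem, ht]
    simp only [h1]
    rw [MeasureTheory.integral_indicator hmeas]
    unfold bNeu
    have h2 : ∀ t : V N, κ (x - t) = κ (t - x) := by
      intro t
      rw [← neg_sub t x, hκ.symm]
    simp only [h2]
  rw [heq]
  exact hconv

lemma cell_isCompact (p : Fin N → ℝ) : IsCompact (cell N p) := by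
  apply Metric.isCompact_of_isClosed_isBounded
  · have : cell N p = ⋂ j, (fun x : V N => x j) ⁻¹' Icc 0 (p j) := by
      ext x; simp [cell, mem_iInter]
    rw [this]
    exact isClosed_iInter fun j =>
      IsClosed.preimage (EuclideanSpace.proj (𝕜 := ℝ) j).continuous isClosed_Icc
  · rw [isBounded_iff_forall_norm_le]
    refine ⟨Real.sqrt (∑ i, (p i) ^ 2), fun x hx => ?_⟩
    rw [EuclideanSpace.norm_eq]
    apply Real.sqrt_le_sqrt
    apply Finset.sum_le_sum
    intro i _
    have h1 := (hx i).1
    have h2 := (hx i).2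
    have hpi : (0:ℝ) ≤ p i := le_trans h1 h2
    rw [Real.norm_eq_abs, sq_abs]
    nlinarith

lemma cell_convex (p : Fin N → ℝ) : Convex ℝ (cell N p) := by
  intro x hx y hy a b ha hb hab
  intro j
  have : (a • x + b • y) j = a * x j + b * y j := by
    rw [PiLp.add_apply, PiLp.smul_apply, PiLp.smul_apply, smul_eq_mul, smul_eq_mul]
  rw [this]
  exact convex_Icc 0 (p j) (hx j) (hy j) ha hb hab

lemma zero_mem_cell (p : Fin N → ℝ) (hp : ∀ j, 0 < p j) : (0 : V N) ∈ cell N p :=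
  fun j => by
    have : (0 : V N) j = 0 := rfl
    rw [this]
    exact ⟨le_refl 0, (hp j).le⟩

lemma shift_invariant_reduce (p : Fin N → ℝ) (hp : ∀ j, 0 < p j) (F : V N → ℝ)
    (hF : ∀ s ∈ pShifts N p, ∀ x, F (x + s) = F x) (x : V N) :
    ∃ x' ∈ cell N p, F x' = F x := by
  have hFz : ∀ (s : V N), (∀ y, F (y + s) = F y) →
      ∀ (k : ℤ) (y : V N), F (y + k • s) = F y := by
    intro s hs k
    induction k using Int.induction_on with
    | zero => intro y; simp
    | succ n ih =>
      intro y
      have e : y + ((n : ℤ) + 1) • s = (y + s) + (n : ℤ) • s := by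
        rw [add_smul, one_smul]; abel
      rw [e, ih, hs]
    | pred n ih =>
      intro y
      have e : y + (-(n : ℤ) - 1) • s = (y - s) + (-(n : ℤ)) • s := by
        rw [sub_smul, one_smul]; abel
      rw [e, ih]
      have h3 := hs (y - s)
      rw [sub_add_cancel] at h3
      exact h3.symm
  set g : Fin N → V N := fun j => p j • EuclideanSpace.single j (1:ℝ) with hg
  have hmem : ∀ j, g j ∈ pShifts N p := fun j => ⟨j, rfl⟩
  have hsum : ∀ (k : Fin N → ℤ) (s : Finset (Fin N)) (y : V N),
      F (y + ∑ j ∈ s, k j • g j) = F y := by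
    intro k s
    induction s using Finset.induction_on with
    | empty => intro y; simp
    | @insert a s ha ih =>
      intro y
      rw [Finset.sum_insert ha, show y + (k a • g a + ∑ j ∈ s, k j • g j)
        = (y + k a • g a) + ∑ j ∈ s, k j • g j by rw [← add_assoc], ih]
      exact hFz (g a) (fun y => hF (g a) (hmem a) y) (k a) y
  refine ⟨x + ∑ j, (-(⌊x j / p j⌋)) • g j, ?_, hsum _ Finset.univ x⟩
  intro j
  have hcoord : (x + ∑ i, (-(⌊x i / p i⌋)) • g i) j
      = x j - (⌊x j / p j⌋ : ℝ) * p j := by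
    rw [PiLp.add_apply]
    congr 1
    have h1 : ∀ i : Fin N, ((-(⌊x i / p i⌋)) • g i) j
        = ((-(⌊x i / p i⌋) : ℤ) : ℝ) * (p i * (if j = i then (1:ℝ) else 0)) := by
      intro i
      rw [← Int.cast_smul_eq_zsmul ℝ]
      simp only [hg, PiLp.smul_apply, EuclideanSpace.single_apply, smul_eq_mul]
      try ring
    have h2 : (∑ i, (-(⌊x i / p i⌋)) • g i) j = ∑ i, ((-(⌊x i / p i⌋) : ℤ) : ℝ)
        * (p i * (if j = i then (1:ℝ) else 0)) := by
      rw [show (∑ i, (-(⌊x i / p i⌋)) • g i) j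
        = ∑ i, ((-(⌊x i / p i⌋)) • g i) j by rw [WithLp.ofLp_sum, Finset.sum_apply]]
      exact Finset.sum_congr rfl fun i _ => h1 i
    rw [h2, Finset.sum_eq_single j]
    · simp only [if_pos rfl, mul_one]; push_cast; try ring
    · intro i _ hij
      simp [Ne.symm hij]
    · intro hj; exact absurd (Finset.mem_univ j) hj
  rw [hcoord]
  have h1 : (⌊x j / p j⌋ : ℝ) ≤ x j / p j := Int.floor_le _
  have h2 : x j / p j < ⌊x j / p j⌋ + 1 := Int.lt_floor_add_one _
  have hpj := hp j
  constructor
  · have := (mul_le_mul_of_nonneg_right h1 hpj.le)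
    rw [div_mul_cancel₀ _ hpj.ne'] at this
    linarith
  · have := (mul_lt_mul_of_pos_right h2 hpj)
    rw [div_mul_cancel₀ _ hpj.ne'] at this
    linarith

end NWProof

namespace NWProof
open NW

variable {N : ℕ}

lemma mhat_shift (T : ℝ) (m : ℝ → V N → ℝ) (s : V N)
    (hms : ∀ t x, m t (x + s) = m t x) (x : V N) :
    mhat T m (x + s) = mhat T m x := by
  unfold mhat
  congr 1
  exact intervalIntegral.integral_congr fun τ _ => hms τ x

end NWProof


/-- (Proposition 3.4(1)), for each `i ∈ {1, 2, 3}`: the set of real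
parts of the spectrum of `ℋ_i u = -∂ₜu + (-b_i + λ m) u` on `𝒳_i` is the closed
interval `[min_{x ∈ D̄_i} ĥ(x), max_{x ∈ D̄_i} ĥ(x)]`, where `ĥ(x) = -b_i(x) + λ m̂(x)`.
(Here `ℋ_i` is obtained from `𝓛_i + λ m` by replacing the kernel with `0`.) -/
theorem multiplication_operator_spectrum
    (N : ℕ) (hN : 1 ≤ N) (D : Set (NW.V N)) (hD : NW.DomainHyp D)
    (T : ℝ) (hT : 0 < T) (p : Fin N → ℝ) (hp : ∀ j, 0 < p j)
    (κ : NW.V N → ℝ) (hκ : NW.KernelHyp κ) :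
    -- i = 1 (Dirichlet type, b₁ = 1)
    (∀ m : ℝ → NW.V N → ℝ, NW.MemW T ∅ m → ∀ lam : ℝ,
      Complex.re '' NW.Spec T (∅ : Set (NW.V N)) (closure D) D (fun _ => 1)
          (fun _ => 0) lam m =
        Set.Icc (sInf ((fun x => -(1:ℝ) + lam * NW.mhat T m x) '' closure D))
          (sSup ((fun x => -(1:ℝ) + lam * NW.mhat T m x) '' closure D))) ∧
    -- i = 2 (Neumann type, b₂ = ∫_D κ(y - ·) dy)
    (∀ m : ℝ → NW.V N → ℝ, NW.MemW T ∅ m → ∀ lam : ℝ,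
      Complex.re '' NW.Spec T (∅ : Set (NW.V N)) (closure D) D (NW.bNeu D κ)
          (fun _ => 0) lam m =
        Set.Icc (sInf ((fun x => -(NW.bNeu D κ x) + lam * NW.mhat T m x) '' closure D))
          (sSup ((fun x => -(NW.bNeu D κ x) + lam * NW.mhat T m x) '' closure D))) ∧
    -- i = 3 (spatially periodic type, b₃ = 1, D̄₃ = cell)
    (∀ m : ℝ → NW.V N → ℝ, NW.MemW T (NW.pShifts N p) m → ∀ lam : ℝ,
      Complex.re '' NW.Spec T (NW.pShifts N p) Set.univ Set.univ (fun _ => 1)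
          (fun _ => 0) lam m =
        Set.Icc (sInf ((fun x => -(1:ℝ) + lam * NW.mhat T m x) '' NW.cell N p))
          (sSup ((fun x => -(1:ℝ) + lam * NW.mhat T m x) '' NW.cell N p))) := by
  
  obtain ⟨hDo, hDne, hDconn, hDb⟩ := hD
  have hCcomp : IsCompact (closure D) :=
    Metric.isCompact_of_isClosed_isBounded isClosed_closure hDb.closure
  have hCpc : IsPreconnected (closure D) := hDconn.isPreconnected.closure
  have hCne : (closure D).Nonempty := hDne.closure
  refine ⟨?_, ?_, ?_⟩
  · intro m hmW lam
    exact NWProof.spec_re_eq T hT ∅ (closure D) (closure D) D (fun _ => 1)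
      continuous_const (fun s hs => absurd hs (Set.notMem_empty s)) m hmW lam
      hCcomp hCpc hCne subset_rfl (fun x hx => ⟨x, hx, rfl⟩)
  · intro m hmW lam
    exact NWProof.spec_re_eq T hT ∅ (closure D) (closure D) D (NW.bNeu D κ)
      (NWProof.bNeu_continuous D hDo hDb hκ)
      (fun s hs => absurd hs (Set.notMem_empty s)) m hmW lam
      hCcomp hCpc hCne subset_rfl (fun x hx => ⟨x, hx, rfl⟩)
  · intro m hmW lam
    have hF : ∀ s ∈ NW.pShifts N p, ∀ x : NW.V N,
        (-(1:ℝ) + lam * NW.mhat T m (x + s)) = -(1:ℝ) + lam * NW.mhat T m x := by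
      intro s hs x
      rw [NWProof.mhat_shift T m s (fun t x => hmW.2.2 s hs t x) x]
    exact NWProof.spec_re_eq T hT (NW.pShifts N p) Set.univ (NW.cell N p) Set.univ
      (fun _ => 1) continuous_const (fun s _ x => rfl) m hmW lam
      (NWProof.cell_isCompact p) ((NWProof.cell_convex p).isPreconnected)
      ⟨0, NWProof.zero_mem_cell p hp⟩ (Set.subset_univ _)
      (fun x _ => NWProof.shift_invariant_reduce p hp
        (fun x => -(1:ℝ) + lam * NW.mhat T m x) hF x)
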